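/- A finite system of strict and non-strict linear inequalities with rational coefficients has a real solution if and only if it has a rational solution: there exists x : Fin q → ℝ with (∀ i, ∑ j, (A i j : ℝ) * x j ≤ (b i : ℝ)) and (∀ k, ∑ j, (C k j : ℝ) * x j < (e k : ℝ)) if and only if there exists x : Fin q → ℚ with (∀ i, ∑ j, A i j * x j ≤ b i) and (∀ k, ∑ j, C k j * x j < e k). -/

import Mathlib

namespace FM

variable {K : Type*} [Field K] [LinearOrder K] [IsStrictOrderedRing K]

/-- `t` satisfies a lower bound (strict if flag). -/
def lbOK (t : K) (pr : K × Bool) : Prop := if pr.2 then pr.1 < t else pr.1 ≤ t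
/-- `t` satisfies an upper bound (strict if flag). -/
def ubOK (t : K) (pr : K × Bool) : Prop := if pr.2 then t < pr.1 else t ≤ pr.1
/-- compatibility of a lower and an upper bound. -/
def cmp (l u : K × Bool) : Prop := if l.2 || u.2 then l.1 < u.1 else l.1 ≤ u.1

lemma lbOK_mono {t t' : K} {pr : K × Bool} (h : t ≤ t') (h2 : lbOK t pr) : lbOK t' pr := by
  unfold lbOK at *; split at h2 <;> simp_all <;> linarith

lemma ubOK_anti {t t' : K} {pr : K × Bool} (h : t' ≤ t) (h2 : ubOK t pr) : ubOK t' pr := by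
  unfold ubOK at *; split at h2 <;> simp_all <;> linarith

lemma exists_ub (Us : List (K × Bool)) : ∃ t : K, ∀ u ∈ Us, ubOK t u := by
  induction Us with
  | nil => exact ⟨0, by simp⟩
  | cons u Us ih =>
    obtain ⟨t, ht⟩ := ih
    refine ⟨min t (u.1 - 1), ?_⟩
    intro v hv
    rcases List.mem_cons.mp hv with h | h
    · subst h
      have : min t (v.1 - 1) < v.1 := lt_of_le_of_lt (min_le_right _ _) (by linarith)
      unfold ubOK; split <;> [exact this; exact this.le]
    · exact ubOK_anti (min_le_left _ _) (ht v h)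

lemma exists_lb_ub (l : K × Bool) (Us : List (K × Bool)) (h : ∀ u ∈ Us, cmp l u) :
    ∃ t : K, lbOK t l ∧ ∀ u ∈ Us, ubOK t u := by
  induction Us with
  | nil =>
    refine ⟨l.1 + 1, ?_, by simp⟩
    unfold lbOK; split <;> linarith
  | cons u Us ih =>
    obtain ⟨t, htl, htu⟩ := ih (fun v hv => h v (List.mem_cons_of_mem _ hv))
    have hc := h u (List.mem_cons_self)
    -- find s with lbOK s l ∧ ubOK s u
    obtain ⟨s, hsl, hsu⟩ : ∃ s : K, lbOK s l ∧ ubOK s u := by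
      unfold cmp at hc
      by_cases hb : l.2 || u.2
      · rw [if_pos hb] at hc
        refine ⟨(l.1 + u.1) / 2, ?_, ?_⟩
        · have : l.1 < (l.1 + u.1) / 2 := by linarith
          unfold lbOK; split <;> [exact this; exact this.le]
        · have : (l.1 + u.1) / 2 < u.1 := by linarith
          unfold ubOK; split <;> [exact this; exact this.le]
      · rw [if_neg hb] at hc
        simp only [Bool.or_eq_true, not_or, Bool.not_eq_true] at hb
        exact ⟨l.1, by unfold lbOK; rw [hb.1]; simp, by unfold ubOK; rw [hb.2]; simpa⟩
    refine ⟨min t s, ?_, ?_⟩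
    · rcases min_choice t s with hm | hm <;> rw [hm]
      · exact htl
      · exact hsl
    · intro v hv
      rcases List.mem_cons.mp hv with hvv | hvv
      · subst hvv; exact ubOK_anti (min_le_right _ _) hsu
      · exact ubOK_anti (min_le_left _ _) (htu v hvv)

lemma exists_between (Ls Us : List (K × Bool))
    (h : ∀ l ∈ Ls, ∀ u ∈ Us, cmp l u) :
    ∃ t : K, (∀ l ∈ Ls, lbOK t l) ∧ (∀ u ∈ Us, ubOK t u) := by
  induction Ls with
  | nil =>
    obtain ⟨t, ht⟩ := exists_ub Us
    exact ⟨t, by simp, ht⟩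
  | cons l Ls ih =>
    obtain ⟨t, htl, htu⟩ := ih (fun l' hl' => h l' (List.mem_cons_of_mem _ hl'))
    obtain ⟨s, hsl, hsu⟩ := exists_lb_ub l Us (h l (List.mem_cons_self))
    refine ⟨max t s, ?_, ?_⟩
    · intro l' hl'
      rcases List.mem_cons.mp hl' with hvv | hvv
      · subst hvv; exact lbOK_mono (le_max_right _ _) hsl
      · exact lbOK_mono (le_max_left _ _) (htl l' hvv)
    · intro u hu
      rcases max_choice t s with hm | hm <;> rw [hm]
      · exact htu u hu
      · exact hsu u hu


/-- A linear constraint: coefficients, rhs, strictness flag. -/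
abbrev Cons (q : ℕ) := (Fin q → ℚ) × ℚ × Bool

variable {K : Type*} [Field K] [LinearOrder K] [IsStrictOrderedRing K] {q : ℕ}

def holds (x : Fin q → K) (c : Cons q) : Prop :=
  if c.2.2 then ∑ j, (c.1 j : K) * x j < (c.2.1 : K)
  else ∑ j, (c.1 j : K) * x j ≤ (c.2.1 : K)

def Sat (K : Type*) [Field K] [LinearOrder K] [IsStrictOrderedRing K] {q : ℕ} (L : List (Cons q)) : Prop :=
  ∃ x : Fin q → K, ∀ c ∈ L, holds x c

/-- drop the first variable (when its coefficient is zero). -/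
def tailC (c : Cons (q + 1)) : Cons q := (fun j => c.1 j.succ, c.2.1, c.2.2)

/-- normalize: divide through by coefficient of first variable. -/
def normC (c : Cons (q + 1)) : Cons q :=
  (fun j => c.1 j.succ / c.1 0, c.2.1 / c.1 0, c.2.2)

def zeros (L : List (Cons (q + 1))) : List (Cons q) :=
  (L.filter (fun c => decide (c.1 0 = 0))).map tailC

def uppers (L : List (Cons (q + 1))) : List (Cons q) :=
  (L.filter (fun c => decide (0 < c.1 0))).map normC

def lowers (L : List (Cons (q + 1))) : List (Cons q) :=
  (L.filter (fun c => decide (c.1 0 < 0))).map normC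

def pairC (l u : Cons q) : Cons q :=
  (fun j => u.1 j - l.1 j, u.2.1 - l.2.1, l.2.2 || u.2.2)

def elim (L : List (Cons (q + 1))) : List (Cons q) :=
  zeros L ++ (lowers L).flatMap (fun l => (uppers L).map (fun u => pairC l u))

/-- the bound value determined by a normalized constraint at a point. -/
def bnd (x : Fin q → K) (d : Cons q) : K := (d.2.1 : K) - ∑ j, (d.1 j : K) * x j

lemma sum_cons (c : Cons (q + 1)) (t : K) (x : Fin q → K) :
    ∑ j, (c.1 j : K) * (Fin.cons t x : Fin (q + 1) → K) j
      = (c.1 0 : K) * t + ∑ j : Fin q, (c.1 j.succ : K) * x j := by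
  rw [Fin.sum_univ_succ]; simp

lemma bnd_normC (c : Cons (q + 1)) (x : Fin q → K) (hc : c.1 0 ≠ 0) :
    bnd x (normC c) = ((c.2.1 : K) - ∑ j : Fin q, (c.1 j.succ : K) * x j) / (c.1 0 : K) := by
  have hc' : (c.1 0 : K) ≠ 0 := by exact_mod_cast hc
  unfold bnd normC
  rw [sub_div, Finset.sum_div]
  push_cast
  congr 1
  refine Finset.sum_congr rfl fun j _ => ?_
  rw [div_mul_eq_mul_div]

lemma holds_cons_zero {c : Cons (q + 1)} (hc : c.1 0 = 0) (t : K) (x : Fin q → K) :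
    holds (Fin.cons t x : Fin (q + 1) → K) c ↔ holds x (tailC c) := by
  unfold holds tailC
  rw [sum_cons]
  simp [hc]

lemma holds_cons_pos {c : Cons (q + 1)} (hc : 0 < c.1 0) (t : K) (x : Fin q → K) :
    holds (Fin.cons t x : Fin (q + 1) → K) c ↔ ubOK t (bnd x (normC c), c.2.2) := by
  have ha : (0 : K) < (c.1 0 : K) := by exact_mod_cast hc
  unfold holds ubOK
  rw [sum_cons, bnd_normC c x hc.ne']
  simp only
  split_ifs with hs
  · rw [lt_div_iff₀ ha]
    constructor <;> intro h <;> nlinarith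
  · rw [le_div_iff₀ ha]
    constructor <;> intro h <;> nlinarith

lemma holds_cons_neg {c : Cons (q + 1)} (hc : c.1 0 < 0) (t : K) (x : Fin q → K) :
    holds (Fin.cons t x : Fin (q + 1) → K) c ↔ lbOK t (bnd x (normC c), c.2.2) := by
  have ha : (c.1 0 : K) < 0 := by exact_mod_cast hc
  unfold holds lbOK
  rw [sum_cons, bnd_normC c x hc.ne]
  simp only
  split_ifs with hs
  · rw [div_lt_iff_of_neg ha]
    constructor <;> intro h <;> nlinarith
  · rw [div_le_iff_of_neg ha]
    constructor <;> intro h <;> nlinarith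

lemma holds_pairC {l u : Cons q} (x : Fin q → K) :
    holds x (pairC l u) ↔ cmp (bnd x l, l.2.2) (bnd x u, u.2.2) := by
  unfold holds pairC cmp bnd
  simp only
  have hsum : ∑ j, ((u.1 j - l.1 j : ℚ) : K) * x j
      = ∑ j, (u.1 j : K) * x j - ∑ j, (l.1 j : K) * x j := by
    rw [← Finset.sum_sub_distrib]
    congr 1; funext j; push_cast; ring
  rw [hsum]
  push_cast
  split_ifs with hs
  · constructor <;> intro h <;> linarith
  · constructor <;> intro h <;> linarith

lemma cmp_of {t : K} {a b : K × Bool} (h1 : lbOK t a) (h2 : ubOK t b) : cmp a b := by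
  unfold lbOK at h1; unfold ubOK at h2; unfold cmp
  cases ha : a.2 <;> cases hb : b.2 <;> simp_all <;> linarith

lemma mem_zeros {c : Cons q} {L : List (Cons (q + 1))} :
    c ∈ zeros L ↔ ∃ c' ∈ L, c'.1 0 = 0 ∧ tailC c' = c := by
  unfold zeros
  simp [List.mem_map, List.mem_filter, decide_eq_true_iff, and_assoc]

lemma mem_uppers {c : Cons q} {L : List (Cons (q + 1))} :
    c ∈ uppers L ↔ ∃ c' ∈ L, 0 < c'.1 0 ∧ normC c' = c := by
  unfold uppers
  simp [List.mem_map, List.mem_filter, decide_eq_true_iff, and_assoc]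

lemma mem_lowers {c : Cons q} {L : List (Cons (q + 1))} :
    c ∈ lowers L ↔ ∃ c' ∈ L, c'.1 0 < 0 ∧ normC c' = c := by
  unfold lowers
  simp [List.mem_map, List.mem_filter, decide_eq_true_iff, and_assoc]

lemma elim_iff (L : List (Cons (q + 1))) (x : Fin q → K) :
    (∀ c ∈ elim L, holds x c) ↔
      ∃ t : K, ∀ c ∈ L, holds (Fin.cons t x : Fin (q + 1) → K) c := by
  constructor
  · intro h
    have hcompat : ∀ pl ∈ (lowers L).map (fun d => (bnd x d, d.2.2)),
        ∀ pu ∈ (uppers L).map (fun d => (bnd x d, d.2.2)), cmp pl pu := by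
      intro pl hpl pu hpu
      obtain ⟨l, hl, rfl⟩ := List.mem_map.mp hpl
      obtain ⟨u, hu, rfl⟩ := List.mem_map.mp hpu
      have hmem : pairC l u ∈ elim L := by
        refine List.mem_append_right _ (List.mem_flatMap.mpr ⟨l, hl, ?_⟩)
        exact List.mem_map.mpr ⟨u, hu, rfl⟩
      exact (holds_pairC x).mp (h _ hmem)
    obtain ⟨t, htl, htu⟩ := exists_between _ _ hcompat
    refine ⟨t, fun c hc => ?_⟩
    rcases lt_trichotomy (c.1 0) 0 with h0 | h0 | h0
    · rw [holds_cons_neg h0]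
      exact htl _ (List.mem_map.mpr ⟨normC c, mem_lowers.mpr ⟨c, hc, h0, rfl⟩, rfl⟩)
    · rw [holds_cons_zero h0]
      exact h _ (List.mem_append_left _ (mem_zeros.mpr ⟨c, hc, h0, rfl⟩))
    · rw [holds_cons_pos h0]
      exact htu _ (List.mem_map.mpr ⟨normC c, mem_uppers.mpr ⟨c, hc, h0, rfl⟩, rfl⟩)
  · rintro ⟨t, ht⟩ c hc
    rcases List.mem_append.mp hc with hc | hc
    · obtain ⟨c', hc', h0, rfl⟩ := mem_zeros.mp hc
      exact (holds_cons_zero h0 t x).mp (ht c' hc')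
    · obtain ⟨l, hl, hc⟩ := List.mem_flatMap.mp hc
      obtain ⟨u, hu, rfl⟩ := List.mem_map.mp hc
      obtain ⟨cl, hcl, h0l, rfl⟩ := mem_lowers.mp hl
      obtain ⟨cu, hcu, h0u, rfl⟩ := mem_uppers.mp hu
      rw [holds_pairC]
      exact cmp_of ((holds_cons_neg h0l t x).mp (ht cl hcl))
        ((holds_cons_pos h0u t x).mp (ht cu hcu))

lemma Sat_elim (L : List (Cons (q + 1))) : Sat K (elim L) ↔ Sat K L := by
  unfold Sat
  constructor
  · rintro ⟨x, hx⟩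
    obtain ⟨t, ht⟩ := (elim_iff L x).mp hx
    exact ⟨Fin.cons t x, ht⟩
  · rintro ⟨x, hx⟩
    refine ⟨Fin.tail x, (elim_iff L (Fin.tail x)).mpr ⟨x 0, ?_⟩⟩
    rwa [Fin.cons_self_tail]

def elimAll : {q : ℕ} → List (Cons q) → List (Cons 0)
  | 0, L => L
  | _ + 1, L => elimAll (elim L)

lemma Sat_elimAll : ∀ {q : ℕ} (L : List (Cons q)), Sat K (elimAll L) ↔ Sat K L
  | 0, L => Iff.rfl
  | q + 1, L => (Sat_elimAll (elim L)).trans (Sat_elim L)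

lemma Sat_zero (L : List (Cons 0)) :
    Sat K L ↔ ∀ c ∈ L, if c.2.2 then 0 < c.2.1 else 0 ≤ c.2.1 := by
  unfold Sat holds
  constructor
  · rintro ⟨x, hx⟩ c hc
    have := hx c hc
    simp only [Finset.univ_eq_empty, Finset.sum_empty] at this
    split_ifs at * <;> exact_mod_cast this
  · intro h
    refine ⟨fun i => i.elim0, fun c hc => ?_⟩
    have := h c hc
    simp only [Finset.univ_eq_empty, Finset.sum_empty]
    split_ifs at * <;> exact_mod_cast this

lemma Sat_field_indep (L : List (Cons q)) : Sat ℝ L ↔ Sat ℚ L := by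
  rw [← Sat_elimAll (K := ℝ) L, ← Sat_elimAll (K := ℚ) L, Sat_zero, Sat_zero]

lemma Sat_system {p q r : ℕ} (A : Matrix (Fin p) (Fin q) ℚ) (C : Matrix (Fin r) (Fin q) ℚ)
    (b : Fin p → ℚ) (e : Fin r → ℚ) (K : Type*) [Field K] [LinearOrder K] [IsStrictOrderedRing K] :
    Sat K ((List.ofFn fun i => ((A i, b i, false) : Cons q)) ++
      (List.ofFn fun k => ((C k, e k, true) : Cons q))) ↔
    ∃ x : Fin q → K,
      (∀ i, ∑ j, (A i j : K) * x j ≤ (b i : K)) ∧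
      (∀ k, ∑ j, (C k j : K) * x j < (e k : K)) := by
  unfold Sat
  apply exists_congr
  intro x
  rw [List.forall_mem_append, List.forall_mem_ofFn_iff, List.forall_mem_ofFn_iff]
  simp [holds]

end FM

theorem rational_solution_iff {p q r : ℕ}
    (A : Matrix (Fin p) (Fin q) ℚ) (C : Matrix (Fin r) (Fin q) ℚ)
    (b : Fin p → ℚ) (e : Fin r → ℚ) :
    (∃ x : Fin q → ℝ,
        (∀ i, ∑ j, (A i j : ℝ) * x j ≤ (b i : ℝ)) ∧
        (∀ k, ∑ j, (C k j : ℝ) * x j < (e k : ℝ)))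
      ↔
    (∃ x : Fin q → ℚ,
        (∀ i, ∑ j, A i j * x j ≤ b i) ∧
        (∀ k, ∑ j, C k j * x j < e k)) := by
  rw [← FM.Sat_system A C b e ℝ, FM.Sat_field_indep, FM.Sat_system A C b e ℚ]
  simp
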